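/- arXiv:0805.4345 — 3 statements merged into one kernel-verified Lean document; each statement's English description precedes it below -/
import Mathlib

section
/- Let ψ : Fin m × Fin n → ℂ be a unit vector (∑_{a,b} |ψ(a,b)|² = 1) representing a pure state of a bipartite system, and let M be the m×n complex matrix with entries M_{ab} = ψ(a,b), so that the reduced density matrix of the first subsystem is ρ_A = M Mᴴ. Then Tr((M Mᴴ)²) = 1 if and only if ψ is a product state, i.e., there exist vectors u : Fin m → ℂ and v : Fin n → ℂ with ψ(a,b) = u(a) · v(b) for all a, b. Equivalently, the General Entanglement E_g(ψ) = 2 − 2·Tr((M Mᴴ)²) vanishes if and only if ψ is completely separable. -/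
open Matrix BigOperators

/-- **Discriminance of General Entanglement for a bipartite pure state.**
For a unit vector `ψ` of a bipartite system with associated matrix `M`, the
purity `Tr((M Mᴴ)²)` of the reduced state equals `1` iff `ψ` is a product
state; equivalently the General Entanglement `E_g = 2 − 2 Tr((M Mᴴ)²)`
vanishes iff `ψ` is completely separable. -/
theorem purity_eq_one_iff_product_state
    (m n : ℕ)
    (ψ : Fin m × Fin n → ℂ) (hψ : ∑ q, ‖ψ q‖ ^ 2 = 1)
    (M : Matrix (Fin m) (Fin n) ℂ) (hM : ∀ a b, M a b = ψ (a, b)) :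
    (((M * M.conjTranspose) * (M * M.conjTranspose)).trace = 1 ↔
      ∃ (u : Fin m → ℂ) (v : Fin n → ℂ), ∀ a b, ψ (a, b) = u a * v b) ∧
    (2 - 2 * ((M * M.conjTranspose) * (M * M.conjTranspose)).trace = 0 ↔
      ∃ (u : Fin m → ℂ) (v : Fin n → ℂ), ∀ a b, ψ (a, b) = u a * v b) := by
  classical
  -- rows of M, viewed as Euclidean vectors
  set r : Fin m → EuclideanSpace ℂ (Fin n) := fun a => WithLp.toLp 2 (fun b => M a b) with hr
  have hinner : ∀ a c, (inner ℂ (r a) (r c) : ℂ) = ∑ b, starRingEnd ℂ (M a b) * M c b := by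
    intro a c
    simp [PiLp.inner_apply, hr, RCLike.inner_apply, mul_comm]
  have hA : ∀ a c, (M * M.conjTranspose) a c = starRingEnd ℂ (inner ℂ (r a) (r c) : ℂ) := by
    intro a c
    rw [hinner, map_sum]
    simp [Matrix.mul_apply, Matrix.conjTranspose_apply, mul_comm]
  -- the trace of the square as a real sum
  have htr : ((M * M.conjTranspose) * (M * M.conjTranspose)).trace
      = ((∑ a, ∑ c, ‖(inner ℂ (r a) (r c) : ℂ)‖ ^ 2 : ℝ) : ℂ) := by
    have hterm : ∀ a c, (M * M.conjTranspose) a c * (M * M.conjTranspose) c a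
        = ((‖(inner ℂ (r a) (r c) : ℂ)‖ ^ 2 : ℝ) : ℂ) := by
      intro a c
      rw [hA a c, hA c a, ← inner_conj_symm (r a) (r c), mul_comm, Complex.mul_conj']
      push_cast [RCLike.norm_conj]
      ring
    have hdiag : ∀ a, ((M * M.conjTranspose) * (M * M.conjTranspose)).diag a
        = ((∑ c, ‖(inner ℂ (r a) (r c) : ℂ)‖ ^ 2 : ℝ) : ℂ) := by
      intro a
      rw [Matrix.diag_apply, Matrix.mul_apply, Finset.sum_congr rfl fun c _ => hterm a c]
      norm_cast
    rw [Matrix.trace, Finset.sum_congr rfl fun a _ => hdiag a]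
    norm_cast
  -- row norms square-sum to 1
  have hnorm : ∑ a, ‖r a‖ ^ 2 = 1 := by
    have : ∀ a, ‖r a‖ ^ 2 = ∑ b, ‖ψ (a, b)‖ ^ 2 := by
      intro a
      rw [EuclideanSpace.norm_eq, Real.sq_sqrt (by positivity)]
      exact Finset.sum_congr rfl fun b _ => by rw [hr]; simp [hM]
    rw [Finset.sum_congr rfl fun a _ => this a]
    rw [Fintype.sum_prod_type] at hψ
    exact hψ
  -- the key iff on the real sum
  have key : (∑ a, ∑ c, ‖(inner ℂ (r a) (r c) : ℂ)‖ ^ 2 : ℝ) = 1 ↔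
      ∃ (u : Fin m → ℂ) (v : Fin n → ℂ), ∀ a b, ψ (a, b) = u a * v b := by
    constructor
    · intro hS
      -- Cauchy–Schwarz termwise
      have hCS : ∀ a c, ‖(inner ℂ (r a) (r c) : ℂ)‖ ^ 2 ≤ (‖r a‖ * ‖r c‖) ^ 2 := fun a c =>
        pow_le_pow_left₀ (norm_nonneg _) (norm_inner_le_norm _ _) 2
      have hbound : (∑ a, ∑ c, (‖r a‖ * ‖r c‖) ^ 2 : ℝ) = 1 := by
        have : (∑ a, ∑ c, (‖r a‖ * ‖r c‖) ^ 2 : ℝ)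
            = (∑ a, ‖r a‖ ^ 2) * (∑ c, ‖r c‖ ^ 2) := by
          rw [Finset.sum_mul_sum]
          exact Finset.sum_congr rfl fun a _ => Finset.sum_congr rfl fun c _ => by ring
        rw [this, hnorm, one_mul]
      -- equality in each term
      have heq : ∀ a c, ‖(inner ℂ (r a) (r c) : ℂ)‖ ^ 2 = (‖r a‖ * ‖r c‖) ^ 2 := by
        have h1 : ∀ a ∈ Finset.univ, (∑ c, ‖(inner ℂ (r a) (r c) : ℂ)‖ ^ 2 : ℝ)
            = ∑ c, (‖r a‖ * ‖r c‖) ^ 2 := by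
          rw [← Finset.sum_eq_sum_iff_of_le
            (fun a _ => Finset.sum_le_sum fun c _ => hCS a c)]
          rw [hS, hbound]
        intro a c
        have h2 := (Finset.sum_eq_sum_iff_of_le (fun c _ => hCS a c)).mp
          (h1 a (Finset.mem_univ a)) c (Finset.mem_univ c)
        exact h2
      have heq' : ∀ a c, ‖(inner ℂ (r a) (r c) : ℂ)‖ = ‖r a‖ * ‖r c‖ := by
        intro a c
        have := heq a c
        nlinarith [norm_nonneg (inner ℂ (r a) (r c) : ℂ), norm_nonneg (r a), norm_nonneg (r c),
          mul_nonneg (norm_nonneg (r a)) (norm_nonneg (r c))]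
      -- find a nonzero row
      have hex : ∃ a₀, r a₀ ≠ 0 := by
        by_contra h
        push_neg at h
        have h0 : (∑ a, ‖r a‖ ^ 2 : ℝ) = 0 :=
          Finset.sum_eq_zero fun a _ => by rw [h a, norm_zero]; ring
        rw [hnorm] at h0; norm_num at h0
      obtain ⟨a₀, ha₀⟩ := hex
      -- each row is a multiple of row a₀
      have hmul : ∀ a, ∃ t : ℂ, r a = t • r a₀ := by
        intro a
        by_cases h : r a = 0
        · exact ⟨0, by simp [h]⟩
        · obtain ⟨t, _, ht⟩ := (norm_inner_eq_norm_iff ha₀ h).mp (heq' a₀ a)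
          exact ⟨t, ht⟩
      choose u hu using hmul
      refine ⟨u, fun b => r a₀ b, fun a b => ?_⟩
      have := congrFun (congrArg (fun x : EuclideanSpace ℂ (Fin n) => (x : Fin n → ℂ)) (hu a)) b
      simpa [hr, hM] using this
    · rintro ⟨u, v, huv⟩
      -- compute the purity directly for a product state
      have hrab : ∀ a, r a = fun b => u a * v b := by
        intro a; funext b; simp [hr, hM, huv]
      have hin : ∀ a c, (inner ℂ (r a) (r c) : ℂ)
          = starRingEnd ℂ (u a) * u c * ∑ b, starRingEnd ℂ (v b) * v b := by
        intro a c
        rw [hinner]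
        rw [Finset.mul_sum]
        apply Finset.sum_congr rfl
        intro b _
        rw [hM, hM, huv, huv, _root_.map_mul]
        ring
      -- set U, K
      set U : ℝ := ∑ a, ‖u a‖ ^ 2 with hU
      set K : ℝ := ∑ b, ‖v b‖ ^ 2 with hK
      have hKc : (∑ b, starRingEnd ℂ (v b) * v b) = (K : ℂ) := by
        rw [hK]; push_cast
        exact Finset.sum_congr rfl fun b _ => by
          rw [mul_comm, Complex.mul_conj']
      have hUK : U * K = 1 := by
        have : ∑ q : Fin m × Fin n, ‖ψ q‖ ^ 2 = U * K := by
          rw [Fintype.sum_prod_type, hU, hK, Finset.sum_mul]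
          apply Finset.sum_congr rfl
          intro a _
          rw [Finset.mul_sum]
          apply Finset.sum_congr rfl
          intro b _
          rw [huv, norm_mul]; ring
        rw [← this, hψ]
      have hnin : ∀ a c, ‖(inner ℂ (r a) (r c) : ℂ)‖ ^ 2 = ‖u a‖ ^ 2 * ‖u c‖ ^ 2 * K ^ 2 := by
        intro a c
        rw [hin, hKc]
        rw [norm_mul, norm_mul]
        have : ‖(K : ℂ)‖ = K := by
          rw [Complex.norm_real, Real.norm_of_nonneg]
          rw [hK]; positivity
        rw [this, RCLike.norm_conj]
        ring
      have : (∑ a, ∑ c, ‖(inner ℂ (r a) (r c) : ℂ)‖ ^ 2 : ℝ) = (U * K) ^ 2 := by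
        calc (∑ a, ∑ c, ‖(inner ℂ (r a) (r c) : ℂ)‖ ^ 2 : ℝ)
            = ∑ a, ∑ c, ‖u a‖ ^ 2 * ‖u c‖ ^ 2 * K ^ 2 := by
              exact Finset.sum_congr rfl fun a _ => Finset.sum_congr rfl fun c _ => hnin a c
          _ = (∑ a, ‖u a‖ ^ 2) * (∑ c, ‖u c‖ ^ 2) * K ^ 2 := by
              rw [Finset.sum_mul_sum, Finset.sum_mul]
              exact Finset.sum_congr rfl fun a _ => by rw [Finset.sum_mul]
          _ = (U * K) ^ 2 := by rw [hU]; ring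
      rw [this, hUK, one_pow]
  have main : ((M * M.conjTranspose) * (M * M.conjTranspose)).trace = 1 ↔
      ∃ (u : Fin m → ℂ) (v : Fin n → ℂ), ∀ a b, ψ (a, b) = u a * v b := by
    rw [htr, ← key]
    exact_mod_cast Iff.rfl
  refine ⟨main, ?_⟩
  rw [← main]
  constructor
  · intro h; linear_combination (-1/2 : ℂ) * h
  · intro h; linear_combination (-2 : ℂ) * h
end

section
/- Let ψ : Fin m × Fin n → ℂ be a unit vector with associated m×n matrix M_{ab} = ψ(a,b), and let U be an m×m unitary matrix and V an n×n unitary matrix. The locally transformed state (U ⊗ V)ψ has associated matrix M' = U M Vᵀ, and the purity of the reduced state is invariant: Tr((M' M'ᴴ)²) = Tr((M Mᴴ)²). Consequently the General Entanglement of a bipartite pure state is invariant under local unitary operations. -/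
open Matrix BigOperators

/-- **Invariance of General Entanglement under local unitaries** (bipartite
case). The locally transformed state `(U ⊗ V) ψ` has associated matrix
`M' = U M Vᵀ`, and the purity of the reduced state is invariant:
`Tr((M' M'ᴴ)²) = Tr((M Mᴴ)²)`. -/
theorem purity_invariant_local_unitary
    (m n : ℕ)
    (ψ : Fin m × Fin n → ℂ) (hψ : ∑ q, ‖ψ q‖ ^ 2 = 1)
    (M : Matrix (Fin m) (Fin n) ℂ) (hM : ∀ a b, M a b = ψ (a, b))
    (U : Matrix (Fin m) (Fin m) ℂ) (hU : U ∈ Matrix.unitaryGroup (Fin m) ℂ)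
    (V : Matrix (Fin n) (Fin n) ℂ) (hV : V ∈ Matrix.unitaryGroup (Fin n) ℂ)
    (ψ' : Fin m × Fin n → ℂ)
    (hψ' : ∀ a b, ψ' (a, b) = ∑ a', ∑ b', U a a' * V b b' * ψ (a', b'))
    (M' : Matrix (Fin m) (Fin n) ℂ) (hM' : ∀ a b, M' a b = ψ' (a, b)) :
    M' = U * M * V.transpose ∧
      ((M' * M'.conjTranspose) * (M' * M'.conjTranspose)).trace
        = ((M * M.conjTranspose) * (M * M.conjTranspose)).trace := by
  have hM'eq : M' = U * M * V.transpose := by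
    ext a b
    rw [hM' a b, hψ' a b]
    simp only [Matrix.mul_apply, Matrix.transpose_apply, Finset.sum_mul]
    rw [Finset.sum_comm]
    apply Finset.sum_congr rfl
    intro b' _
    apply Finset.sum_congr rfl
    intro a' _
    rw [hM a' b']
    ring
  refine ⟨hM'eq, ?_⟩
  have hV1 : V.transpose * (V.transpose).conjTranspose = 1 := by
    have : V.conjTranspose * V = 1 := hV.1
    have hct : (V.transpose).conjTranspose = (V.conjTranspose).transpose := by
      ext i j; simp [Matrix.conjTranspose_apply]
    calc V.transpose * (V.transpose).conjTranspose
        = (V.conjTranspose * V).transpose := by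
          rw [Matrix.transpose_mul, hct]
      _ = 1 := by rw [this, Matrix.transpose_one]
  have hUU : U.conjTranspose * U = 1 := hU.1
  have key : M' * M'.conjTranspose = U * (M * M.conjTranspose) * U.conjTranspose := by
    rw [hM'eq]
    simp only [Matrix.conjTranspose_mul]
    calc U * M * V.transpose * ((V.transpose).conjTranspose * (M.conjTranspose * U.conjTranspose))
        = U * M * (V.transpose * (V.transpose).conjTranspose) * (M.conjTranspose * U.conjTranspose) := by
          simp only [Matrix.mul_assoc]
      _ = U * (M * M.conjTranspose) * U.conjTranspose := by
          rw [hV1, Matrix.mul_one]; simp only [Matrix.mul_assoc]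
  rw [key]
  have : U * (M * M.conjTranspose) * U.conjTranspose * (U * (M * M.conjTranspose) * U.conjTranspose)
      = U * ((M * M.conjTranspose) * (M * M.conjTranspose)) * U.conjTranspose := by
    calc U * (M * M.conjTranspose) * U.conjTranspose * (U * (M * M.conjTranspose) * U.conjTranspose)
        = U * (M * M.conjTranspose) * (U.conjTranspose * U) * ((M * M.conjTranspose) * U.conjTranspose) := by
          simp only [Matrix.mul_assoc]
      _ = _ := by rw [hUU, Matrix.mul_one]; simp only [Matrix.mul_assoc]
  rw [this, Matrix.trace_mul_cycle, ← Matrix.mul_assoc, hUU, Matrix.one_mul]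
end

section
/- Let ψ : Fin 2 × Fin 2 → ℂ be a unit vector (a pure state of two qubits) and let M be the 2×2 complex matrix with entries M_{ab} = ψ(a,b). Then the General Entanglement of ψ equals the square of Wootters' concurrence: 2 − 2·Tr((M Mᴴ)²) = 4·|det M|². Equivalently, 1 − Tr((M Mᴴ)²) = 2·|det M|². -/
open Matrix BigOperators

/-- For a two-qubit pure state `ψ` with associated matrix `M`, the General
Entanglement equals the squared Wootters concurrence:
`2 − 2 Tr((M Mᴴ)²) = 4 |det M|²`; equivalently
`1 − Tr((M Mᴴ)²) = 2 |det M|²`. -/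
theorem general_entanglement_eq_concurrence_sq
    (ψ : Fin 2 × Fin 2 → ℂ) (hψ : ∑ q, ‖ψ q‖ ^ 2 = 1)
    (M : Matrix (Fin 2) (Fin 2) ℂ) (hM : ∀ a b, M a b = ψ (a, b)) :
    2 - 2 * ((M * M.conjTranspose) * (M * M.conjTranspose)).trace
        = 4 * ((‖M.det‖ : ℂ)) ^ 2 ∧
    1 - ((M * M.conjTranspose) * (M * M.conjTranspose)).trace
        = 2 * ((‖M.det‖ : ℂ)) ^ 2 := by
  have key : 1 - ((M * M.conjTranspose) * (M * M.conjTranspose)).trace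
        = 2 * ((‖M.det‖ : ℂ)) ^ 2 := by
    rw [Fintype.sum_prod_type] at hψ
    simp only [← hM, Fin.sum_univ_two, Complex.sq_norm,
      Complex.normSq_apply] at hψ
    simp only [Matrix.trace_fin_two, Matrix.mul_apply, Matrix.conjTranspose_apply,
      Fin.sum_univ_two, Matrix.det_fin_two, ← Complex.ofReal_pow, Complex.sq_norm,
      Complex.normSq_apply, RCLike.star_def,
      Complex.ext_iff, Complex.sub_re, Complex.sub_im, Complex.mul_re, Complex.mul_im,
      Complex.add_re, Complex.add_im, Complex.ofReal_re, Complex.ofReal_im,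
      Complex.one_re, Complex.one_im, Complex.re_ofNat, Complex.im_ofNat,
      Complex.conj_re, Complex.conj_im]
    have h2 := congrArg (· ^ 2) hψ
    simp only [one_pow] at h2
    constructor
    · linear_combination - h2
    · ring
  refine ⟨?_, key⟩
  linear_combination 2 * key
end
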